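/- Let ‖·‖ be a norm on ℝ^n (equipped with the Euclidean inner product ⟨·,·⟩) with dual norm ‖y‖_* := sup{⟨y,s⟩ : ‖s‖ ≤ 1}. Let C ⊆ ℝ^n be a nonempty compact convex set with diameter D := max_{x,y∈C} ‖x - y‖, and let f : ℝ^n → ℝ be continuously differentiable with f* := min_{x∈C} f(x) and G := max_{x∈C} ‖∇f(x)‖_*. Let M > 0 and set Ĉ := max{M, 1, G}·(max{D, 1})². Suppose sequences x : ℕ → ℝ^n, v : ℕ → ℝ^n, t : ℕ → ℝ, Λ : ℕ → ℝ satisfy, for every k ∈ ℕ: (i) x_k ∈ C and v_k minimizes u ↦ ⟨∇f(x_k), u⟩ over C; (ii) with d_k := v_k - x_k and Gap_k := ⟨∇f(x_k), x_k - v_k⟩, one has 0 < Λ_k ≤ M and t_k = min{ Gap_k/(Λ_k·‖d_k‖²), 1 } if d_k ≠ 0, and t_k = 0 if d_k = 0; (iii) x_{k+1} = x_k + t_k·d_k; (iv) f(x_{k+1}) ≤ f(x_k) + t_k·⟨∇f(x_k), d_k⟩ + (Λ_k/2)·t_k²·‖d_k‖². Then for every N ∈ ℕ, min_{0 ≤ k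 ≤ N} Gap_k ≤ √( 2·Ĉ·(f(x_0) - f*)/(N+1) ). -/

import Mathlib

open scoped RealInnerProductSpace

/-- The dual norm `ν*(y) = sup {⟨y, s⟩ : ν s ≤ 1}` of a norm `ν` on `ℝⁿ`. -/
noncomputable def dualNorm {n : ℕ} (ν : EuclideanSpace ℝ (Fin n) → ℝ)
    (y : EuclideanSpace ℝ (Fin n)) : ℝ :=
  sSup {r : ℝ | ∃ s : EuclideanSpace ℝ (Fin n), ν s ≤ 1 ∧ r = ⟪y, s⟫}


section aux
variable {n : ℕ} (nrm : EuclideanSpace ℝ (Fin n) → ℝ)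
  (hadd : ∀ u v, nrm (u + v) ≤ nrm u + nrm v)
  (hsmul : ∀ (a : ℝ) (u : EuclideanSpace ℝ (Fin n)), nrm (a • u) = |a| * nrm u)
  (heq0 : ∀ u, nrm u = 0 ↔ u = 0)

include hadd hsmul heq0 in
lemma nrm_facts :
    (∀ u, 0 ≤ nrm u) ∧ ∃ m > 0, ∀ s, m * ‖s‖ ≤ nrm s := by
  have h0 : nrm 0 = 0 := (heq0 0).mpr rfl
  have hneg : ∀ u, nrm (-u) = nrm u := by
    intro u
    have := hsmul (-1) u
    simpa using this
  have hnn : ∀ u, 0 ≤ nrm u := by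
    intro u
    have h := hadd u (-u)
    rw [add_neg_cancel, h0, hneg] at h
    linarith
  refine ⟨hnn, ?_⟩
  -- coordinate bound
  have hcoord : ∀ (u : EuclideanSpace ℝ (Fin n)) (i : Fin n), |u i| ≤ ‖u‖ := by
    intro u i
    rw [EuclideanSpace.norm_eq, ← Real.sqrt_sq_eq_abs]
    apply Real.sqrt_le_sqrt
    have : |u i| ^ 2 ≤ ∑ j, ‖u j‖ ^ 2 := by
      have := Finset.single_le_sum (f := fun j => ‖u j‖ ^ 2)
        (fun j _ => by positivity) (Finset.mem_univ i)
      simpa [sq_abs] using this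
    simpa [sq_abs] using this
  -- u as sum of singles
  have hrep : ∀ u : EuclideanSpace ℝ (Fin n),
      u = ∑ i, u i • EuclideanSpace.single i (1 : ℝ) := by
    intro u
    ext j
    rw [WithLp.ofLp_sum, Finset.sum_apply]
    simp [EuclideanSpace.single_apply]
  have hsum : ∀ (s : Finset (Fin n)) (g : Fin n → EuclideanSpace ℝ (Fin n)),
      nrm (∑ i ∈ s, g i) ≤ ∑ i ∈ s, nrm (g i) := by
    intro s g
    induction s using Finset.cons_induction with
    | empty => simp [h0]
    | cons i s hi ih =>
      rw [Finset.sum_cons, Finset.sum_cons]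
      exact (hadd _ _).trans (by linarith)
  set K : ℝ := ∑ i, nrm (EuclideanSpace.single i (1 : ℝ)) with hK
  have hKnn : 0 ≤ K := Finset.sum_nonneg fun i _ => hnn _
  have hlip : ∀ u, nrm u ≤ K * ‖u‖ := by
    intro u
    calc nrm u = nrm (∑ i, u i • EuclideanSpace.single i (1 : ℝ)) := by rw [← hrep]
      _ ≤ ∑ i, nrm (u i • EuclideanSpace.single i (1 : ℝ)) := hsum _ _
      _ = ∑ i, |u i| * nrm (EuclideanSpace.single i (1 : ℝ)) := by
          simp [hsmul]
      _ ≤ ∑ i, ‖u‖ * nrm (EuclideanSpace.single i (1 : ℝ)) := by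
          apply Finset.sum_le_sum
          intro i _
          exact mul_le_mul_of_nonneg_right (hcoord u i) (hnn _)
      _ = K * ‖u‖ := by rw [← Finset.mul_sum]; ring
  -- continuity
  have hcont : Continuous nrm := by
    have : LipschitzWith (Real.toNNReal K) nrm := by
      apply LipschitzWith.of_dist_le_mul
      intro u w
      rw [Real.dist_eq, dist_eq_norm]
      have h1 : nrm u - nrm w ≤ nrm (u - w) := by
        have := hadd (u - w) w
        rw [sub_add_cancel] at this
        linarith
      have h2 : nrm w - nrm u ≤ nrm (u - w) := by
        have := hadd (w - u) u
        rw [sub_add_cancel] at this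
        have := hneg (u - w)
        rw [neg_sub] at this
        linarith
      have := hlip (u - w)
      rw [abs_le]
      constructor <;>
        [skip; skip] <;>
        nlinarith [Real.coe_toNNReal K hKnn, norm_nonneg (u - w)]
    exact this.continuous
  rcases subsingleton_or_nontrivial (EuclideanSpace ℝ (Fin n)) with hss | hnt
  · refine ⟨1, one_pos, fun s => ?_⟩
    have : s = 0 := Subsingleton.elim s 0
    simp [this, h0]
  · obtain ⟨s₀, hs₀m, hs₀min⟩ :=
      (isCompact_sphere (0 : EuclideanSpace ℝ (Fin n)) 1).exists_isMinOn
        (NormedSpace.sphere_nonempty.mpr zero_le_one) hcont.continuousOn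
    have hs₀norm : ‖s₀‖ = 1 := by simpa using mem_sphere_zero_iff_norm.mp hs₀m
    have hs₀ne : s₀ ≠ 0 := by intro h; rw [h] at hs₀norm; simp at hs₀norm
    set m := nrm s₀ with hm
    have hmpos : 0 < m := lt_of_le_of_ne (hnn s₀) fun h => hs₀ne ((heq0 s₀).mp h.symm)
    refine ⟨m, hmpos, fun s => ?_⟩
    rcases eq_or_ne s 0 with rfl | hs
    · simp [h0]
    · have hns : 0 < ‖s‖ := norm_pos_iff.mpr hs
      have hmem : (‖s‖⁻¹ • s) ∈ Metric.sphere (0 : EuclideanSpace ℝ (Fin n)) 1 := by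
        rw [mem_sphere_zero_iff_norm, norm_smul, norm_inv, norm_norm]
        field_simp
      have := hs₀min hmem
      simp only [Set.mem_setOf_eq] at this
      rw [hsmul] at this
      have habs : |‖s‖⁻¹| = ‖s‖⁻¹ := abs_of_pos (by positivity)
      rw [habs] at this
      -- m ≤ ‖s‖⁻¹ * nrm s
      have := mul_le_mul_of_nonneg_left this hns.le
      calc m * ‖s‖ = ‖s‖ * m := by ring
        _ ≤ ‖s‖ * (‖s‖⁻¹ * nrm s) := this
        _ = nrm s := by field_simp

include hadd hsmul heq0 in
lemma dualNorm_facts :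
    (∀ y, 0 ≤ dualNorm nrm y) ∧
    (∀ y s, ⟪y, s⟫ ≤ dualNorm nrm y * nrm s) := by
  obtain ⟨hnn, m, hmpos, hml⟩ := nrm_facts nrm hadd hsmul heq0
  have h0 : nrm 0 = 0 := (heq0 0).mpr rfl
  have hbdd : ∀ y : EuclideanSpace ℝ (Fin n), BddAbove
      {r : ℝ | ∃ s : EuclideanSpace ℝ (Fin n), nrm s ≤ 1 ∧ r = ⟪y, s⟫} := by
    intro y
    refine ⟨‖y‖ * m⁻¹, ?_⟩
    rintro r ⟨s, hs1, rfl⟩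
    have h1 : ⟪y, s⟫ ≤ ‖y‖ * ‖s‖ := real_inner_le_norm y s
    have h2 : ‖s‖ ≤ m⁻¹ := by
      rw [← one_div, le_div_iff₀ hmpos]
      nlinarith [hml s]
    nlinarith [norm_nonneg y]
  have hmem0 : ∀ y : EuclideanSpace ℝ (Fin n), (0 : ℝ) ∈
      {r : ℝ | ∃ s : EuclideanSpace ℝ (Fin n), nrm s ≤ 1 ∧ r = ⟪y, s⟫} :=
    fun y => ⟨0, by simp [h0], by simp⟩
  have hdnn : ∀ y, 0 ≤ dualNorm nrm y := fun y => le_csSup (hbdd y) (hmem0 y)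
  refine ⟨hdnn, fun y s => ?_⟩
  rcases eq_or_ne s 0 with rfl | hs
  · simp [h0]
  · have hns : 0 < nrm s := lt_of_le_of_ne (hnn s) fun h => hs ((heq0 s).mp h.symm)
    have hmem : ⟪y, (nrm s)⁻¹ • s⟫ ∈
        {r : ℝ | ∃ s' : EuclideanSpace ℝ (Fin n), nrm s' ≤ 1 ∧ r = ⟪y, s'⟫} := by
      refine ⟨(nrm s)⁻¹ • s, ?_, rfl⟩
      rw [hsmul, abs_of_pos (by positivity)]
      rw [inv_mul_cancel₀ hns.ne']
    have hle : ⟪y, (nrm s)⁻¹ • s⟫ ≤ dualNorm nrm y := le_csSup (hbdd y) hmem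
    rw [inner_smul_right] at hle
    have := mul_le_mul_of_nonneg_left hle hns.le
    calc ⟪y, s⟫ = nrm s * ((nrm s)⁻¹ * ⟪y, s⟫) := by field_simp
      _ ≤ nrm s * dualNorm nrm y := this
      _ = dualNorm nrm y * nrm s := by ring

end aux

/-- Constrained non-convex convergence rate of Adaptive Conditional
Gradient Descent (Frank–Wolfe variant): with `Ĉ = max{M,1,G}·(max{D,1})²`,
`min_{0 ≤ k ≤ N} Gap_k ≤ √(2·Ĉ·(f(x_0)-f*)/(N+1))`, where
`Gap_k = ⟨∇f(x_k), x_k - v_k⟩` is the Frank–Wolfe gap. -/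
theorem acgd_constrained_nonconvex_rate {n : ℕ}
    (nrm : EuclideanSpace ℝ (Fin n) → ℝ)
    (hnrm_add : ∀ u v, nrm (u + v) ≤ nrm u + nrm v)
    (hnrm_smul : ∀ (a : ℝ) (u : EuclideanSpace ℝ (Fin n)), nrm (a • u) = |a| * nrm u)
    (hnrm_eq0 : ∀ u, nrm u = 0 ↔ u = 0)
    (C : Set (EuclideanSpace ℝ (Fin n)))
    (hCne : C.Nonempty) (hCcomp : IsCompact C) (hCconv : Convex ℝ C)
    (D : ℝ) (hD : IsGreatest {r : ℝ | ∃ a ∈ C, ∃ b ∈ C, r = nrm (a - b)} D)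
    (f : EuclideanSpace ℝ (Fin n) → ℝ)
    (f' : EuclideanSpace ℝ (Fin n) → EuclideanSpace ℝ (Fin n))
    (hf : ∀ y, HasGradientAt f (f' y) y) (hf' : Continuous f')
    (fstar : ℝ) (hfstar : IsLeast (f '' C) fstar)
    (G : ℝ) (hG : IsGreatest ((fun z => dualNorm nrm (f' z)) '' C) G)
    (M : ℝ) (hM : 0 < M)
    (Chat : ℝ) (hChat : Chat = max M (max 1 G) * (max D 1) ^ 2)
    (x v : ℕ → EuclideanSpace ℝ (Fin n)) (t Λ : ℕ → ℝ)
    (hxC : ∀ k, x k ∈ C) (hvC : ∀ k, v k ∈ C)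
    (hlmo : ∀ k, ∀ u ∈ C, ⟪f' (x k), v k⟫ ≤ ⟪f' (x k), u⟫)
    (hΛ : ∀ k, 0 < Λ k ∧ Λ k ≤ M)
    (ht : ∀ k, v k - x k ≠ 0 →
      t k = min (⟪f' (x k), x k - v k⟫ / (Λ k * nrm (v k - x k) ^ 2)) 1)
    (ht0 : ∀ k, v k - x k = 0 → t k = 0)
    (hx : ∀ k, x (k + 1) = x k + t k • (v k - x k))
    (hdec : ∀ k, f (x (k + 1)) ≤
      f (x k) + t k * ⟪f' (x k), v k - x k⟫ + Λ k / 2 * t k ^ 2 * nrm (v k - x k) ^ 2) :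
    ∀ N : ℕ, ∃ k ≤ N,
      ⟪f' (x k), x k - v k⟫ ≤ Real.sqrt (2 * Chat * (f (x 0) - fstar) / ((N : ℝ) + 1)) := by
  intro N
  obtain ⟨hdnn, hCS⟩ := dualNorm_facts nrm hnrm_add hnrm_smul hnrm_eq0
  have hnrm_nn : ∀ u, 0 ≤ nrm u := (nrm_facts nrm hnrm_add hnrm_smul hnrm_eq0).1
  set g : ℕ → ℝ := fun k => ⟪f' (x k), x k - v k⟫ with hgdef
  have hgnn : ∀ k, 0 ≤ g k := by
    intro k
    have h1 := hlmo k (x k) (hxC k)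
    have h2 : g k = ⟪f' (x k), x k⟫ - ⟪f' (x k), v k⟫ := by
      simp only [hgdef]; rw [inner_sub_right]
    linarith
  -- basic positivity facts
  have hA1 : (1 : ℝ) ≤ max M (max 1 G) := le_trans (le_max_left 1 G) (le_max_right _ _)
  have hB1 : (1 : ℝ) ≤ max D 1 := le_max_right D 1
  have hChatpos : 0 < Chat := by rw [hChat]; nlinarith
  have hDnn : 0 ≤ D := by
    obtain ⟨a, _, b, _, hab⟩ := hD.1
    rw [hab]; exact hnrm_nn _
  have hGnn : 0 ≤ G := by
    obtain ⟨z, _, hz⟩ := hG.1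
    rw [← hz]; exact hdnn _
  have hd_le_D : ∀ (p q : ℕ → EuclideanSpace ℝ (Fin n)), (∀ k, p k ∈ C) → (∀ k, q k ∈ C) →
      ∀ k, nrm (p k - q k) ≤ D := fun p q hp hq k => hD.2 ⟨p k, hp k, q k, hq k, rfl⟩
  have ha_le : ∀ k, g k ≤ Chat := by
    intro k
    have h1 : g k ≤ dualNorm nrm (f' (x k)) * nrm (x k - v k) := hCS _ _
    have h2 : dualNorm nrm (f' (x k)) ≤ G := hG.2 ⟨x k, hxC k, rfl⟩
    have h3 : nrm (x k - v k) ≤ D := hd_le_D x v hxC hvC k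
    have h4 : 0 ≤ nrm (x k - v k) := hnrm_nn _
    have h5 : G ≤ max M (max 1 G) := le_trans (le_max_right 1 G) (le_max_right _ _)
    have h6 : D ≤ max D 1 := le_max_left D 1
    have hAnn : (0:ℝ) ≤ max M (max 1 G) := by linarith
    rw [hChat]
    calc g k ≤ dualNorm nrm (f' (x k)) * nrm (x k - v k) := h1
      _ ≤ G * D := mul_le_mul h2 h3 h4 hGnn
      _ ≤ max M (max 1 G) * max D 1 := mul_le_mul h5 h6 hDnn hAnn
      _ ≤ max M (max 1 G) * (max D 1) ^ 2 := by nlinarith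
  have hb_le : ∀ k, Λ k * nrm (v k - x k) ^ 2 ≤ Chat := by
    intro k
    have h3 : nrm (v k - x k) ≤ D := hd_le_D v x hvC hxC k
    have h4 : 0 ≤ nrm (v k - x k) := hnrm_nn _
    have h5 : M ≤ max M (max 1 G) := le_max_left _ _
    have h6 : D ≤ max D 1 := le_max_left D 1
    have h7 := (hΛ k).1
    have h8 := (hΛ k).2
    have hAnn : (0:ℝ) ≤ max M (max 1 G) := by linarith
    have h9 : nrm (v k - x k) ^ 2 ≤ D ^ 2 := by nlinarith
    have h10 : D ^ 2 ≤ (max D 1) ^ 2 := by nlinarith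
    rw [hChat]
    calc Λ k * nrm (v k - x k) ^ 2 ≤ M * D ^ 2 :=
        mul_le_mul h8 h9 (by positivity) hM.le
      _ ≤ max M (max 1 G) * (max D 1) ^ 2 :=
        mul_le_mul h5 h10 (by positivity) hAnn
  -- key per-step decrease
  have key : ∀ k, g k ^ 2 / (2 * Chat) ≤ f (x k) - f (x (k + 1)) := by
    intro k
    rcases eq_or_ne (v k - x k) 0 with hzero | hne
    · have ht' := ht0 k hzero
      have hx' : x (k + 1) = x k := by rw [hx k, ht', zero_smul, add_zero]
      have hg0 : g k = 0 := by
        have hxv : x k - v k = 0 := by rw [← neg_sub, hzero, neg_zero]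
        simp only [hgdef]; rw [hxv, inner_zero_right]
      rw [hg0, hx']
      simp
    · have hdpos : 0 < nrm (v k - x k) :=
        lt_of_le_of_ne (hnrm_nn _) fun h => hne ((hnrm_eq0 _).mp h.symm)
      have hΛpos := (hΛ k).1
      set a := g k with ha
      set b := Λ k * nrm (v k - x k) ^ 2 with hb
      have hbpos : 0 < b := by positivity
      have htk : t k = min (a / b) 1 := ht k hne
      have hinner : ⟪f' (x k), v k - x k⟫ = -a := by
        have h : v k - x k = -(x k - v k) := (neg_sub _ _).symm
        rw [h, inner_neg_right]
      have hdec' := hdec k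
      rw [hinner] at hdec'
      have hbb : Λ k / 2 * t k ^ 2 * nrm (v k - x k) ^ 2 = b / 2 * t k ^ 2 := by
        rw [hb]; ring
      rw [hbb] at hdec'
      have hsuff : a ^ 2 / (2 * Chat) ≤ t k * a - b / 2 * t k ^ 2 := by
        rcases le_or_gt (a / b) 1 with hcase | hcase
        · rw [htk, min_eq_left hcase]
          have heq : a / b * a - b / 2 * (a / b) ^ 2 = a ^ 2 / (2 * b) := by
            field_simp; ring
          rw [heq]
          apply div_le_div_of_nonneg_left (by positivity) (by positivity)
          linarith [hb_le k]
        · rw [htk, min_eq_right hcase.le]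
          have hba : b ≤ a := by
            have := (one_lt_div hbpos).mp hcase
            linarith
          rw [div_le_iff₀ (by positivity)]
          nlinarith [hgnn k, ha_le k]
      linarith
  -- telescoping
  have htel : ∑ k ∈ Finset.range (N + 1), (f (x k) - f (x (k + 1))) = f (x 0) - f (x (N + 1)) :=
    Finset.sum_range_sub' (fun k => f (x k)) (N + 1)
  have hfN : fstar ≤ f (x (N + 1)) := hfstar.2 ⟨x (N + 1), hxC _, rfl⟩
  have hsumle : ∑ k ∈ Finset.range (N + 1), g k ^ 2 / (2 * Chat) ≤ f (x 0) - fstar := by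
    calc ∑ k ∈ Finset.range (N + 1), g k ^ 2 / (2 * Chat)
        ≤ ∑ k ∈ Finset.range (N + 1), (f (x k) - f (x (k + 1))) :=
          Finset.sum_le_sum fun k _ => key k
      _ = f (x 0) - f (x (N + 1)) := htel
      _ ≤ f (x 0) - fstar := by linarith
  obtain ⟨k₀, hk₀mem, hk₀min⟩ :=
    Finset.exists_min_image (Finset.range (N + 1)) g ⟨0, by simp⟩
  refine ⟨k₀, Nat.lt_succ_iff.mp (Finset.mem_range.mp hk₀mem), ?_⟩
  apply Real.le_sqrt_of_sq_le
  have hcard : ((N : ℝ) + 1) * (g k₀ ^ 2 / (2 * Chat)) ≤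
      ∑ k ∈ Finset.range (N + 1), g k ^ 2 / (2 * Chat) := by
    have h := Finset.card_nsmul_le_sum (Finset.range (N + 1))
      (fun k => g k ^ 2 / (2 * Chat)) (g k₀ ^ 2 / (2 * Chat))
      (fun k hk => by
        have h1 : g k₀ ^ 2 ≤ g k ^ 2 := pow_le_pow_left₀ (hgnn k₀) (hk₀min k hk) 2
        exact (div_le_div_iff_of_pos_right (by linarith)).mpr h1)
    simpa [Finset.card_range, nsmul_eq_mul, Nat.cast_add, Nat.cast_one] using h
  have hNpos : (0 : ℝ) < (N : ℝ) + 1 := by positivity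
  rw [le_div_iff₀ hNpos]
  show g k₀ ^ 2 * ((N : ℝ) + 1) ≤ 2 * Chat * (f (x 0) - fstar)
  have hh := hcard.trans hsumle
  rw [← mul_div_assoc] at hh
  have hh3 := (div_le_iff₀ (by linarith : (0:ℝ) < 2 * Chat)).mp hh
  nlinarith [hh3]
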